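/- Let A be a real unital Banach algebra and let B : ℝ → A be continuous. Then there exists a unique differentiable map g : ℝ → A such that g(0) = 1 and g'(t) = −B(t)·g(t) for all t ∈ ℝ; moreover g(t) is invertible in A for every t. (This solution is the multiplicative integral of −B, underlying the multiplicative direct image construction.) -/

import Mathlib

open Set Filter Topology

set_option linter.unusedSectionVars false
set_option maxHeartbeats 1000000

section MultiplicativeIntegralAux

variable {A : Type*} [NormedRing A] [NormedAlgebra ℝ A] [CompleteSpace A]
variable (L : ℝ → A →L[ℝ] A)

/-- Local existence for a linear ODE `f' t = L t (f t)`. -/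
lemma mi_local (hL : Continuous L) {M ε : ℝ} (hM0 : 0 ≤ M) (hε : 0 < ε)
    (hMε : M * ε ≤ 1 / 2) (t₀ : ℝ) (x₀ : A)
    (hM : ∀ t ∈ Icc (t₀ - ε) (t₀ + ε), ‖L t‖ ≤ M) :
    ∃ f : ℝ → A, f t₀ = x₀ ∧
      ∀ t ∈ Icc (t₀ - ε) (t₀ + ε),
        HasDerivWithinAt f (L t (f t)) (Icc (t₀ - ε) (t₀ + ε)) t := by
  have ht₀ : t₀ ∈ Icc (t₀ - ε) (t₀ + ε) := ⟨by linarith, by linarith⟩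
  have hpl : IsPicardLindelof (fun t x => L t x) (⟨t₀, ht₀⟩ : Icc (t₀ - ε) (t₀ + ε)) x₀
      (‖x₀‖₊ + 1) 0 (M * (2 * ‖x₀‖ + 1)).toNNReal M.toNNReal := by
    constructor
    · intro t ht
      refine ((L t).lipschitz.weaken ?_).lipschitzOnWith
      rw [← NNReal.coe_le_coe, coe_nnnorm, Real.coe_toNNReal _ hM0]
      exact hM t ht
    · intro x _
      exact (hL.clm_apply continuous_const).continuousOn
    · intro t ht x hx
      have hxx : ‖x‖ ≤ 2 * ‖x₀‖ + 1 := by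
        have h1 : ‖x‖ - ‖x₀‖ ≤ ‖x - x₀‖ := norm_sub_norm_le x x₀
        have h2 : ‖x - x₀‖ ≤ ‖x₀‖ + 1 := by
          have := mem_closedBall_iff_norm.mp hx
          simpa using this
        linarith
      rw [Real.coe_toNNReal _ (by positivity)]
      calc ‖L t x‖ ≤ ‖L t‖ * ‖x‖ := (L t).le_opNorm x
        _ ≤ M * (2 * ‖x₀‖ + 1) :=
          mul_le_mul (hM t ht) hxx (norm_nonneg x) hM0
    · have hmax : max (t₀ + ε - t₀) (t₀ - (t₀ - ε)) = ε := by
        simp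
      simp only [hmax]
      rw [Real.coe_toNNReal _ (by positivity)]
      have h1 : M * ε * (2 * ‖x₀‖ + 1) ≤ (1 / 2) * (2 * ‖x₀‖ + 1) :=
        mul_le_mul_of_nonneg_right hMε (by positivity)
      simp
      nlinarith [norm_nonneg x₀]
  exact hpl.exists_eq_forall_mem_Icc_hasDerivWithinAt₀

/-- Gluing two adjacent solutions of the linear ODE. -/
lemma mi_glue {a b c : ℝ} (hab : a ≤ b) (hbc : b ≤ c) (f g : ℝ → A) (hfg : f b = g b)
    (hf : ∀ t ∈ Icc a b, HasDerivWithinAt f (L t (f t)) (Icc a b) t)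
    (hg : ∀ t ∈ Icc b c, HasDerivWithinAt g (L t (g t)) (Icc b c) t) :
    ∃ F : ℝ → A, EqOn F f (Icc a b) ∧ EqOn F g (Icc b c) ∧
      ∀ t ∈ Icc a c, HasDerivWithinAt F (L t (F t)) (Icc a c) t := by
  classical
  set F : ℝ → A := fun t => if t ≤ b then f t else g t with hF
  have e1 : EqOn F f (Icc a b) := fun t ht => if_pos ht.2
  have e2 : EqOn F g (Icc b c) := by
    intro t ht
    by_cases h : t ≤ b
    · have htb : t = b := le_antisymm h ht.1
      simp [hF, htb, hfg]
    · simp [hF, h]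
  refine ⟨F, e1, e2, ?_⟩
  intro t ht
  rcases lt_trichotomy t b with htb | htb | htb
  · have hmem : Icc a b ∈ 𝓝[Icc a c] t :=
      mem_nhdsWithin.mpr ⟨Iio b, isOpen_Iio, htb, fun x hx => ⟨hx.2.1, hx.1.le⟩⟩
    have h1 : HasDerivWithinAt f (L t (f t)) (Icc a c) t :=
      (hf t ⟨ht.1, htb.le⟩).mono_of_mem_nhdsWithin hmem
    have hFt : F t = f t := if_pos htb.le
    have hev : F =ᶠ[𝓝[Icc a c] t] f := by
      filter_upwards [nhdsWithin_le_nhds (Iio_mem_nhds htb)] with x hx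
      exact if_pos (le_of_lt hx)
    rw [hFt]
    exact h1.congr_of_eventuallyEq hev hFt
  · subst htb
    have hFb : F t = f t := if_pos le_rfl
    have h1 : HasDerivWithinAt F (L t (f t)) (Icc a t) t :=
      (hf t ⟨hab, le_rfl⟩).congr (fun x hx => e1 hx) hFb
    have h2 : HasDerivWithinAt F (L t (f t)) (Icc t c) t := by
      have := (hg t ⟨le_rfl, hbc⟩).congr (fun x hx => e2 hx) (hFb.trans hfg)
      rwa [← hfg] at this
    rw [hFb]
    have := h1.union h2
    rwa [Icc_union_Icc_eq_Icc hab hbc] at this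
  · have hmem : Icc b c ∈ 𝓝[Icc a c] t :=
      mem_nhdsWithin.mpr ⟨Ioi b, isOpen_Ioi, htb, fun x hx => ⟨hx.1.le, hx.2.2⟩⟩
    have h1 : HasDerivWithinAt g (L t (g t)) (Icc a c) t :=
      (hg t ⟨htb.le, ht.2⟩).mono_of_mem_nhdsWithin hmem
    have hFt : F t = g t := if_neg (not_le.mpr htb)
    have hev : F =ᶠ[𝓝[Icc a c] t] g := by
      filter_upwards [nhdsWithin_le_nhds (Ioi_mem_nhds htb)] with x hx
      exact if_neg (not_le.mpr hx)
    rw [hFt]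
    exact h1.congr_of_eventuallyEq hev hFt


/-- Uniqueness of solutions of the linear ODE on a compact interval. -/
lemma mi_uniq (hL : Continuous L) {a b t₀ : ℝ} (ht₀ : t₀ ∈ Icc a b) {f g : ℝ → A}
    (hf : ∀ t ∈ Icc a b, HasDerivWithinAt f (L t (f t)) (Icc a b) t)
    (hg : ∀ t ∈ Icc a b, HasDerivWithinAt g (L t (g t)) (Icc a b) t)
    (heq : f t₀ = g t₀) : EqOn f g (Icc a b) := by
  classical
  obtain ⟨M₀, hM₀⟩ := (isCompact_Icc (a := a) (b := b)).exists_bound_of_continuousOn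
    hL.continuousOn
  set K : NNReal := (max M₀ 0).toNNReal with hK
  set s : ℝ → Set A := fun t => if t ∈ Icc a b then univ else ∅ with hs
  have hv : ∀ t, LipschitzOnWith K (fun x => L t x) (s t) := by
    intro t
    by_cases h : t ∈ Icc a b
    · rw [hs]
      simp only [if_pos h]
      rw [lipschitzOnWith_univ]
      refine (L t).lipschitz.weaken ?_
      rw [← NNReal.coe_le_coe, coe_nnnorm, hK, Real.coe_toNNReal _ (le_max_right _ _)]
      exact (hM₀ t h).trans (le_max_left _ _)
    · rw [hs]
      simp only [if_neg h]
      exact lipschitzOnWith_empty _ _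
  have hfc : ContinuousOn f (Icc a b) := fun t ht => (hf t ht).continuousWithinAt
  have hgc : ContinuousOn g (Icc a b) := fun t ht => (hg t ht).continuousWithinAt
  have hmem : ∀ t ∈ Icc a b, ∀ x : A, x ∈ s t := by
    intro t ht x
    rw [hs]
    simp [ht]
  have hright : EqOn f g (Icc t₀ b) := by
    refine ODE_solution_unique_of_mem_Icc_right (fun t _ => hv t)
      (hfc.mono (Icc_subset_Icc ht₀.1 le_rfl)) ?_
      (fun t ht' => hmem t ⟨ht₀.1.trans ht'.1, ht'.2.le⟩ _)
      (hgc.mono (Icc_subset_Icc ht₀.1 le_rfl)) ?_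
      (fun t ht' => hmem t ⟨ht₀.1.trans ht'.1, ht'.2.le⟩ _) heq
    · intro t ht'
      refine (hf t ⟨ht₀.1.trans ht'.1, ht'.2.le⟩).mono_of_mem_nhdsWithin ?_
      exact mem_nhdsWithin.mpr ⟨Iio b, isOpen_Iio, ht'.2,
        fun x hx => ⟨(ht₀.1.trans ht'.1).trans hx.2, hx.1.le⟩⟩
    · intro t ht'
      refine (hg t ⟨ht₀.1.trans ht'.1, ht'.2.le⟩).mono_of_mem_nhdsWithin ?_
      exact mem_nhdsWithin.mpr ⟨Iio b, isOpen_Iio, ht'.2,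
        fun x hx => ⟨(ht₀.1.trans ht'.1).trans hx.2, hx.1.le⟩⟩
  have hleft : EqOn f g (Icc a t₀) := by
    refine ODE_solution_unique_of_mem_Icc_left (fun t _ => hv t)
      (hfc.mono (Icc_subset_Icc le_rfl ht₀.2)) ?_
      (fun t ht' => hmem t ⟨ht'.1.le, ht'.2.trans ht₀.2⟩ _)
      (hgc.mono (Icc_subset_Icc le_rfl ht₀.2)) ?_
      (fun t ht' => hmem t ⟨ht'.1.le, ht'.2.trans ht₀.2⟩ _) heq
    · intro t ht'
      refine (hf t ⟨ht'.1.le, ht'.2.trans ht₀.2⟩).mono_of_mem_nhdsWithin ?_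
      exact mem_nhdsWithin.mpr ⟨Ioi a, isOpen_Ioi, ht'.1,
        fun x hx => ⟨hx.1.le, hx.2.trans (ht'.2.trans ht₀.2)⟩⟩
    · intro t ht'
      refine (hg t ⟨ht'.1.le, ht'.2.trans ht₀.2⟩).mono_of_mem_nhdsWithin ?_
      exact mem_nhdsWithin.mpr ⟨Ioi a, isOpen_Ioi, ht'.1,
        fun x hx => ⟨hx.1.le, hx.2.trans (ht'.2.trans ht₀.2)⟩⟩
  rw [← Icc_union_Icc_eq_Icc ht₀.1 ht₀.2]
  exact hleft.union hright


lemma mi_singleton (f : ℝ → A) (x : ℝ) (c : A) : HasDerivWithinAt f c {x} x := by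
  rw [HasDerivWithinAt, nhdsWithin_singleton]
  simp [hasDerivAtFilter_iff_isLittleO, Asymptotics.isLittleO_pure]

/-- Existence of the solution on `Icc (-T) T` with initial value `1` at `0`. -/
lemma mi_Icc (hL : Continuous L) (T : ℝ) (hT : 0 ≤ T) :
    ∃ f : ℝ → A, f 0 = 1 ∧
      ∀ t ∈ Icc (-T) T, HasDerivWithinAt f (L t (f t)) (Icc (-T) T) t := by
  obtain ⟨M₀, hM₀⟩ := (isCompact_Icc (a := -(T + 1)) (b := T + 1)).exists_bound_of_continuousOn
    hL.continuousOn
  set M : ℝ := max M₀ 0 with hMdef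
  have hM0 : 0 ≤ M := le_max_right _ _
  have hM : ∀ t ∈ Icc (-(T + 1)) (T + 1), ‖L t‖ ≤ M :=
    fun t ht => (hM₀ t ht).trans (le_max_left _ _)
  set ε : ℝ := 1 / (2 * M + 2) with hεdef
  have hε : 0 < ε := by positivity
  have hε1 : ε ≤ 1 := by
    rw [hεdef, div_le_one (by linarith)]
    linarith
  have hMε : M * ε ≤ 1 / 2 := by
    rw [hεdef, mul_one_div, div_le_div_iff₀ (by linarith) (by norm_num)]
    linarith
  have key : ∀ n : ℕ, ∃ f : ℝ → A, f 0 = 1 ∧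
      ∀ t ∈ Icc (-(min (n * ε) T)) (min (n * ε) T),
        HasDerivWithinAt f (L t (f t)) (Icc (-(min (n * ε) T)) (min (n * ε) T)) t := by
    intro n
    induction n with
    | zero =>
      refine ⟨fun _ => 1, rfl, ?_⟩
      have h0 : min ((0 : ℕ) * ε) T = 0 := by
        simp [hT]
      rw [h0, neg_zero, Icc_self]
      intro t ht
      rw [mem_singleton_iff] at ht
      subst ht
      exact mi_singleton _ _ _
    | succ n ih =>
      obtain ⟨f, hf0, hf⟩ := ih
      set b : ℝ := min (n * ε) T with hbdef
      set b' : ℝ := min ((n + 1 : ℕ) * ε) T with hb'def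
      have hb0 : 0 ≤ b := le_min (by positivity) hT
      have hbT : b ≤ T := min_le_right _ _
      have hb'T : b' ≤ T := min_le_right _ _
      have hbb' : b ≤ b' := by
        refine min_le_min (mul_le_mul_of_nonneg_right ?_ hε.le) le_rfl
        push_cast
        linarith
      have hb'ε : b' ≤ b + ε := by
        rcases le_total ((n : ℝ) * ε) T with h | h
        · have : b = n * ε := min_eq_left h
          rw [this]
          calc b' ≤ (n + 1 : ℕ) * ε := min_le_left _ _
            _ = n * ε + ε := by push_cast; ring
        · have : b = T := min_eq_right h
          rw [this]
          linarith [hb'T]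
      -- local solutions at both ends
      have hMb : ∀ t ∈ Icc (b - ε) (b + ε), ‖L t‖ ≤ M := by
        intro t ht
        exact hM t ⟨by linarith [ht.1], by linarith [ht.2]⟩
      obtain ⟨fp, hfp0, hfp⟩ := mi_local L hL hM0 hε hMε b (f b) hMb
      have hMb' : ∀ t ∈ Icc (-b - ε) (-b + ε), ‖L t‖ ≤ M := by
        intro t ht
        exact hM t ⟨by linarith [ht.1], by linarith [ht.2]⟩
      obtain ⟨fm, hfm0, hfm⟩ := mi_local L hL hM0 hε hMε (-b) (f (-b)) hMb'
      -- restrictions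
      have hfp' : ∀ t ∈ Icc b b', HasDerivWithinAt fp (L t (fp t)) (Icc b b') t := by
        intro t ht
        refine (hfp t ⟨by linarith [ht.1], by linarith [ht.2]⟩).mono
          (Icc_subset_Icc (by linarith) (by linarith))
      have hfm' : ∀ t ∈ Icc (-b') (-b), HasDerivWithinAt fm (L t (fm t)) (Icc (-b') (-b)) t := by
        intro t ht
        refine (hfm t ⟨by linarith [ht.1], by linarith [ht.2]⟩).mono
          (Icc_subset_Icc (by linarith) (by linarith))
      obtain ⟨F1, e1m, e1f, hF1⟩ := mi_glue L (a := -b') (b := -b) (c := b)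
        (by linarith) (by linarith) fm f hfm0 hfm' hf
      have hF1b : F1 b = fp b := by
        rw [e1f ⟨by linarith, le_rfl⟩, hfp0]
      obtain ⟨F, eF1, eFp, hF⟩ := mi_glue L (a := -b') (b := b) (c := b')
        (by linarith) hbb' F1 fp hF1b hF1 hfp'
      refine ⟨F, ?_, ?_⟩
      · rw [eF1 ⟨by linarith, hb0⟩, e1f ⟨by linarith, hb0⟩, hf0]
      · intro t ht
        exact hF t ht
  obtain ⟨n, hn⟩ := exists_nat_ge (T / ε)
  have hTn : T ≤ n * ε := by
    rw [div_le_iff₀ hε] at hn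
    linarith
  obtain ⟨f, hf0, hf⟩ := key n
  rw [min_eq_right hTn] at hf
  exact ⟨f, hf0, hf⟩


/-- Global existence for the linear ODE. -/
lemma mi_global (hL : Continuous L) :
    ∃ g : ℝ → A, g 0 = 1 ∧ ∀ t, HasDerivAt g (L t (g t)) t := by
  have H : ∀ n : ℕ, ∃ f : ℝ → A, f 0 = 1 ∧ ∀ t ∈ Icc (-(n + 1 : ℝ)) (n + 1),
      HasDerivWithinAt f (L t (f t)) (Icc (-(n + 1 : ℝ)) (n + 1)) t :=
    fun n => mi_Icc L hL (n + 1) (by positivity)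
  choose F hF0 hFd using H
  have agree : ∀ m n : ℕ, m ≤ n → EqOn (F m) (F n) (Icc (-(m + 1 : ℝ)) (m + 1)) := by
    intro m n hmn
    have hcast : (m : ℝ) + 1 ≤ n + 1 := by
      have := (Nat.cast_le (α := ℝ)).mpr hmn
      linarith
    refine mi_uniq L hL (t₀ := 0) ⟨by linarith [Nat.cast_nonneg (α := ℝ) m], by positivity⟩
      (hFd m) ?_ (by rw [hF0 m, hF0 n])
    intro t ht
    exact (hFd n t (Icc_subset_Icc (by linarith) hcast ht)).mono
      (Icc_subset_Icc (by linarith) hcast)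
  set g : ℝ → A := fun t => F ⌊|t|⌋₊ t with hg
  have gF : ∀ (n : ℕ) (t : ℝ), |t| < n + 1 → g t = F n t := by
    intro n t ht
    have hmem : ∀ k : ℕ, |t| < k + 1 → t ∈ Icc (-(k + 1 : ℝ)) (k + 1) := by
      intro k hk
      have := abs_lt.mp hk
      exact ⟨this.1.le, this.2.le⟩
    have hfl : |t| < (⌊|t|⌋₊ : ℝ) + 1 := Nat.lt_floor_add_one _
    rcases le_total ⌊|t|⌋₊ n with h | h
    · exact agree _ _ h (hmem _ hfl)
    · exact (agree _ _ h (hmem _ ht)).symm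
  have hg0 : g 0 = 1 := by
    rw [hg]
    simp only [abs_zero, Nat.floor_zero]
    exact hF0 0
  refine ⟨g, hg0, ?_⟩
  intro t
  set n : ℕ := ⌊|t|⌋₊ with hn
  have hfl : |t| < (n : ℝ) + 1 := Nat.lt_floor_add_one _
  have hto : t ∈ Ioo (-(n + 1 : ℝ)) (n + 1) := by
    have := abs_lt.mp hfl
    exact ⟨this.1, this.2⟩
  have hD : HasDerivAt (F n) (L t (F n t)) t :=
    (hFd n t (Ioo_subset_Icc_self hto)).hasDerivAt (Icc_mem_nhds hto.1 hto.2)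
  have hE : g =ᶠ[𝓝 t] F n := by
    filter_upwards [Ioo_mem_nhds hto.1 hto.2] with x hx
    exact gF n x (abs_lt.mpr ⟨hx.1, hx.2⟩)
  have := hD.congr_of_eventuallyEq hE
  simpa [gF n t hfl] using this


end MultiplicativeIntegralAux

/-- **Multiplicative integral / existence and uniqueness of the solution of the
Cauchy problem `g 0 = 1`, `g' t = -(B t) * g t`** in a real unital Banach algebra `A`,
for a continuous `B : ℝ → A`.  Moreover, every value `g t` is invertible (a unit of `A`). -/
theorem multiplicative_integral_exists_unique
    {A : Type*} [NormedRing A] [NormedAlgebra ℝ A] [CompleteSpace A]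
    (B : ℝ → A) (hB : Continuous B) :
    ∃ g : ℝ → A,
      (Differentiable ℝ g ∧ g 0 = 1 ∧ ∀ t : ℝ, deriv g t = -(B t) * g t) ∧
      (∀ t : ℝ, IsUnit (g t)) ∧
      (∀ h : ℝ → A,
        (Differentiable ℝ h ∧ h 0 = 1 ∧ ∀ t : ℝ, deriv h t = -(B t) * h t) → h = g) := by
  -- the left-multiplication linear vector field
  set Ll : ℝ → A →L[ℝ] A := fun t => ContinuousLinearMap.mul ℝ A (-(B t)) with hLl
  have hLlc : Continuous Ll := (ContinuousLinearMap.mul ℝ A).continuous.comp hB.neg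
  have hLlapp : ∀ (t : ℝ) (x : A), Ll t x = -(B t) * x := by
    intro t x
    simp [hLl]
  -- the right-multiplication linear vector field
  set Lr : ℝ → A →L[ℝ] A := fun t => (ContinuousLinearMap.mul ℝ A).flip (B t) with hLr
  have hLrc : Continuous Lr := (ContinuousLinearMap.mul ℝ A).flip.continuous.comp hB
  have hLrapp : ∀ (t : ℝ) (x : A), Lr t x = x * B t := by
    intro t x
    simp [hLr]
  obtain ⟨g, hg0, hgd⟩ := mi_global Ll hLlc
  have hgd' : ∀ t, HasDerivAt g (-(B t) * g t) t := by
    intro t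
    have := hgd t
    rwa [hLlapp] at this
  obtain ⟨h, hh0, hhd⟩ := mi_global Lr hLrc
  have hhd' : ∀ t, HasDerivAt h (h t * B t) t := by
    intro t
    have := hhd t
    rwa [hLrapp] at this
  -- h is a pointwise left inverse of g
  have hp0 : ∀ s : ℝ, HasDerivAt (fun u => h u * g u) 0 s := by
    intro s
    have := (hhd' s).mul (hgd' s)
    have hval : h s * B s * g s + h s * (-(B s) * g s) = 0 := by
      rw [neg_mul, mul_neg, mul_assoc, add_neg_cancel]
    rwa [hval] at this
  have hleftinv : ∀ t, h t * g t = 1 := by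
    intro t
    have := is_const_of_deriv_eq_zero (f := fun u => h u * g u)
      (fun s => (hp0 s).differentiableAt) (fun s => (hp0 s).deriv) t 0
    simpa [hh0, hg0] using this
  -- g is a pointwise left inverse of h, via uniqueness for the two-sided vector field
  set L2 : ℝ → A →L[ℝ] A := fun t => Ll t + Lr t with hL2
  have hL2c : Continuous L2 := hLlc.add hLrc
  have hL2app : ∀ (t : ℝ) (x : A), L2 t x = -(B t) * x + x * B t := by
    intro t x
    simp [hL2, hLlapp, hLrapp]
  have hq : ∀ s : ℝ, HasDerivAt (fun u => g u * h u) (L2 s (g s * h s)) s := by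
    intro s
    have := (hgd' s).mul (hhd' s)
    have hval : -(B s) * g s * h s + g s * (h s * B s) = L2 s (g s * h s) := by
      rw [hL2app, mul_assoc, mul_assoc]
    rwa [hval] at this
  have hone : ∀ s : ℝ, HasDerivAt (fun _ : ℝ => (1 : A)) (L2 s 1) s := by
    intro s
    have : L2 s 1 = 0 := by
      rw [hL2app, mul_one, one_mul, neg_add_cancel]
    rw [this]
    exact hasDerivAt_const s 1
  have hrightinv : ∀ t, g t * h t = 1 := by
    intro t
    have habs : t ∈ Icc (-(|t| + 1)) (|t| + 1) := by
      constructor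
      · linarith [neg_abs_le t]
      · linarith [le_abs_self t]
    have h0mem : (0 : ℝ) ∈ Icc (-(|t| + 1)) (|t| + 1) := by
      constructor
      · linarith [abs_nonneg t]
      · linarith [abs_nonneg t]
    have := mi_uniq L2 hL2c h0mem
      (f := fun u => g u * h u) (g := fun _ => (1 : A))
      (fun s _ => (hq s).hasDerivWithinAt)
      (fun s _ => by
        have := hone s
        exact this.hasDerivWithinAt)
      (by simp [hg0, hh0]) habs
    simpa using this
  refine ⟨g, ⟨fun t => (hgd' t).differentiableAt, hg0, fun t => (hgd' t).deriv⟩, ?_, ?_⟩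
  · intro t
    exact ⟨⟨g t, h t, hrightinv t, hleftinv t⟩, rfl⟩
  · rintro f ⟨hfdiff, hf0, hfderiv⟩
    funext t
    have hfd : ∀ s : ℝ, HasDerivAt f (Ll s (f s)) s := by
      intro s
      have := (hfdiff s).hasDerivAt
      rw [hfderiv s] at this
      rwa [hLlapp]
    have habs : t ∈ Icc (-(|t| + 1)) (|t| + 1) := by
      constructor
      · linarith [neg_abs_le t]
      · linarith [le_abs_self t]
    have h0mem : (0 : ℝ) ∈ Icc (-(|t| + 1)) (|t| + 1) := by
      constructor
      · linarith [abs_nonneg t]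
      · linarith [abs_nonneg t]
    exact mi_uniq Ll hLlc h0mem
      (fun s _ => (hfd s).hasDerivWithinAt)
      (fun s _ => (hgd s).hasDerivWithinAt)
      (by rw [hf0, hg0]) habs
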